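/- Let p be a target probability density and q₁,…,q_M proposal densities on a measurable space X, with n_m i.i.d. samples x_{m,1},…,x_{m,n_m} drawn from each q_m. Assume that for every x with p(x)·f(x) ≠ 0, the mixture Σ_j n_j q_j(x) > 0. Then the balance-heuristic multiple importance sampling estimator Σ_{m=1}^M Σ_{l=1}^{n_m} p(x_{m,l}) f(x_{m,l}) / (Σ_{j=1}^M n_j q_j(x_{m,l})) is an unbiased estimator of E_p[f(X)], i.e., its expectation equals ∫ f(x) p(x) dx. -/

import Mathlib

open MeasureTheory Finset

/-- Unbiasedness of the balance-heuristic multiple importance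
sampling estimator.  `p` is the target density, `q m` the proposal densities
(w.r.t. a common σ-finite reference measure `μ`), each `x m l` is a sample
distributed according to the density `q m`, and wherever `p x * f x ≠ 0` the
mixture `∑ j, n j * q j x` is positive.  Then the expectation of the MIS
estimator with balance heuristic equals `∫ f x * p x ∂μ = E_p[f]`. -/
theorem mis_balance_heuristic_unbiased
    {X : Type*} [MeasurableSpace X] (μ : Measure X) [SigmaFinite μ]
    {Ω : Type*} [MeasurableSpace Ω] (P : Measure Ω) [IsProbabilityMeasure P]
    (M : ℕ) (n : Fin M → ℕ)
    (p : X → ℝ) (q : Fin M → X → ℝ) (f : X → ℝ)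
    (hp0 : ∀ x, 0 ≤ p x) (hq0 : ∀ m x, 0 ≤ q m x)
    (hpmeas : Measurable p) (hqmeas : ∀ m, Measurable (q m)) (hfmeas : Measurable f)
    (hpdens : ∫ x, p x ∂μ = 1)
    (hqdens : ∀ m, ∫ x, q m x ∂μ = 1)
    (hfint : Integrable (fun x => f x * p x) μ)
    -- samples: x m l is the l-th i.i.d. sample from the distribution with density q m
    (x : (m : Fin M) → Fin (n m) → Ω → X)
    (hxmeas : ∀ m l, Measurable (x m l))
    (hlaw : ∀ m l, Measure.map (x m l) P = μ.withDensity (fun y => ENNReal.ofReal (q m y)))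
    (hiid : ∀ (m m' : Fin M) (l : Fin (n m)) (l' : Fin (n m')),
        ((m : ℕ), (l : ℕ)) ≠ ((m' : ℕ), (l' : ℕ)) →
        ∀ (A B : Set X), MeasurableSet A → MeasurableSet B →
          P (x m l ⁻¹' A ∩ x m' l' ⁻¹' B) = P (x m l ⁻¹' A) * P (x m' l' ⁻¹' B))
    -- support condition: the mixture is positive wherever p·f ≠ 0
    (hsupp : ∀ y, p y * f y ≠ 0 → 0 < ∑ j, (n j : ℝ) * q j y) :
    ∫ ω, (∑ m, ∑ l : Fin (n m),
        p (x m l ω) * f (x m l ω) / ∑ j, (n j : ℝ) * q j (x m l ω)) ∂P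
      = ∫ y, f y * p y ∂μ := by
  classical
  set S : X → ℝ := fun y => ∑ j, (n j : ℝ) * q j y with hSdef
  set g : X → ℝ := fun y => p y * f y / S y with hgdef
  have hS0 : ∀ y, 0 ≤ S y := fun y =>
    Finset.sum_nonneg fun j _ => mul_nonneg (Nat.cast_nonneg _) (hq0 j y)
  have hSmeas : Measurable S :=
    Finset.measurable_sum _ fun j _ => measurable_const.mul (hqmeas j)
  have hgmeas : Measurable g := (hpmeas.mul hfmeas).div hSmeas
  have key : ∀ y, S y * g y = p y * f y := by
    intro y
    by_cases h : S y = 0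
    · have hpf : p y * f y = 0 := by
        by_contra hpf
        have h1 := hsupp y hpf
        have h2 : ∑ j, (n j : ℝ) * q j y = 0 := h
        linarith
      simp [hgdef, h, hpf]
    · simp only [hgdef]; field_simp
  -- bound for each summand
  have hbound : ∀ (m : Fin M) y, 1 ≤ n m → |q m y * g y| ≤ |f y * p y| := by
    intro m y hm
    by_cases h : S y = 0
    · have hq : q m y = 0 := by
        have := (Finset.sum_eq_zero_iff_of_nonneg
          (fun j _ => mul_nonneg (Nat.cast_nonneg _) (hq0 j y))).mp h m (Finset.mem_univ m)
        have hn : (0:ℝ) < (n m : ℝ) := by exact_mod_cast hm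
        nlinarith [this]
      simp [hq, abs_nonneg]; positivity
    · have hSpos : 0 < S y := lt_of_le_of_ne (hS0 y) (Ne.symm h)
      have hle : q m y ≤ S y := by
        have h1 : (n m : ℝ) * q m y ≤ S y :=
          Finset.single_le_sum (f := fun j => (n j : ℝ) * q j y)
            (fun j _ => mul_nonneg (Nat.cast_nonneg _) (hq0 j y)) (Finset.mem_univ m)
        have hn : (1:ℝ) ≤ (n m : ℝ) := by exact_mod_cast hm
        nlinarith [hq0 m y]
      calc |q m y * g y| = q m y * |g y| := by
            rw [abs_mul, abs_of_nonneg (hq0 m y)]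
        _ ≤ S y * |g y| := by
            exact mul_le_mul_of_nonneg_right hle (abs_nonneg _)
        _ = |S y * g y| := by rw [abs_mul, abs_of_nonneg (hS0 y)]
        _ = |f y * p y| := by rw [key y, abs_mul, abs_mul, mul_comm]
  have hqg_int : ∀ m : Fin M, 1 ≤ n m → Integrable (fun y => q m y * g y) μ := by
    intro m hm
    refine hfint.mono (((hqmeas m).mul hgmeas).aestronglyMeasurable) ?_
    filter_upwards with y
    simpa only [Real.norm_eq_abs] using hbound m y hm
  -- change of variables
  have hcov : ∀ (m : Fin M) (l : Fin (n m)),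
      ∫ ω, g (x m l ω) ∂P = ∫ y, q m y * g y ∂μ := by
    intro m l
    rw [← integral_map (hxmeas m l).aemeasurable hgmeas.aestronglyMeasurable, hlaw m l]
    have : (fun y => ENNReal.ofReal (q m y)) = fun y => ((q m y).toNNReal : ENNReal) := rfl
    rw [this, integral_withDensity_eq_integral_smul
      (by exact (hqmeas m).real_toNNReal) g]
    congr 1
    ext y
    simp [NNReal.smul_def, Real.coe_toNNReal _ (hq0 m y)]
  have hint_comp : ∀ (m : Fin M) (l : Fin (n m)),
      Integrable (fun ω => g (x m l ω)) P := by
    intro m l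
    have hm : 1 ≤ n m := l.pos
    have h1 : Integrable g (μ.withDensity fun y => ENNReal.ofReal (q m y)) := by
      have : (fun y => ENNReal.ofReal (q m y)) = fun y => ((q m y).toNNReal : ENNReal) := rfl
      rw [this, integrable_withDensity_iff_integrable_smul (by exact (hqmeas m).real_toNNReal)]
      have : (fun y => (q m y).toNNReal • g y) = fun y => q m y * g y := by
        ext y; simp [NNReal.smul_def, Real.coe_toNNReal _ (hq0 m y)]
      rw [this]
      exact hqg_int m hm
    rw [← hlaw m l] at h1
    exact (integrable_map_measure hgmeas.aestronglyMeasurable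
      (hxmeas m l).aemeasurable).mp h1
  have hintm : ∀ m : Fin M, Integrable (fun y => (n m : ℝ) * (q m y * g y)) μ := by
    intro m
    rcases Nat.eq_zero_or_pos (n m) with h | h
    · simp [h]
    · exact (hqg_int m h).const_mul _
  calc ∫ ω, (∑ m, ∑ l : Fin (n m),
        p (x m l ω) * f (x m l ω) / ∑ j, (n j : ℝ) * q j (x m l ω)) ∂P
      = ∫ ω, ∑ m, ∑ l : Fin (n m), g (x m l ω) ∂P := rfl
    _ = ∑ m, ∑ l : Fin (n m), ∫ ω, g (x m l ω) ∂P := by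
        rw [integral_finset_sum _ fun m _ => integrable_finset_sum _ fun l _ => hint_comp m l]
        exact Finset.sum_congr rfl fun m _ => integral_finset_sum _ fun l _ => hint_comp m l
    _ = ∑ m, (n m : ℝ) * ∫ y, q m y * g y ∂μ := by
        refine Finset.sum_congr rfl fun m _ => ?_
        simp [hcov m, Finset.sum_const, nsmul_eq_mul]
    _ = ∑ m, ∫ y, (n m : ℝ) * (q m y * g y) ∂μ := by
        refine Finset.sum_congr rfl fun m _ => ?_
        rw [integral_const_mul]
    _ = ∫ y, ∑ m, (n m : ℝ) * (q m y * g y) ∂μ := (integral_finset_sum _ fun m _ => hintm m).symm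
    _ = ∫ y, f y * p y ∂μ := by
        congr 1
        ext y
        have : ∑ m, (n m : ℝ) * (q m y * g y) = S y * g y := by
          rw [hSdef, Finset.sum_mul]
          exact Finset.sum_congr rfl fun m _ => by ring
        rw [this, key y, mul_comm]
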